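/- Let π be a probability mass function on ℕ with probability generating function f(s) = Σ_{k≥0} π_k s^k and mean μ = Σ_{k≥0} k·π_k satisfying 1 < μ < ∞, let q ∈ [0,1) be the fixed point of f in [0,1), and set h(s) = (1 − f(s))/(1 − s). Let f_i denote the i-th iterate of f (f_0 the identity), define g(s) = ((μ − 1)/μ)·Σ_{i=0}^∞ f_i(s)/μ^i, γ(s) = (1 − g(s))/(1 − s), and κ = (μ − 1)/(μ·log μ). Then for every s ∈ (q,1), the three series below converge absolutely and γ(s) + κ·log(1 − s) = ((μ − 1)/μ)·Σ_{i=0}^∞ μ^{−i}·(1 − f_i(s))/(1 − s) − (κ/μ)·Σ_{i=0}^∞ μ^{−i}·h(f_i(s))·((1 − f_i(s))/(1 − s))·log(h(f_i(s))) + (κ/μ)·Σ_{i=0}^∞ μ^{−i}·(μ − h(f_i(s)))·((1 − f_i(s))/(1 − s))·log(1 − f_i(s)). -/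

import Mathlib

open Set

theorem stmt_12 (p : ℕ → ℝ) (hp0 : ∀ k, 0 ≤ p k) (hp1 : ∑' k, p k = 1)
    (f : ℝ → ℝ) (hf : ∀ s, f s = ∑' k : ℕ, p k * s ^ k)
    (μ : ℝ) (hμdef : μ = ∑' k : ℕ, (k : ℝ) * p k) (hμ : 1 < μ)
    (q : ℝ) (hq : q ∈ Ico (0:ℝ) 1) (hqfix : f q = q)
    (h g γ : ℝ → ℝ)
    (hh : ∀ s, h s = (1 - f s) / (1 - s))
    (hg : ∀ s, g s = (μ - 1) / μ * ∑' i : ℕ, f^[i] s / μ ^ i)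
    (hγ : ∀ s, γ s = (1 - g s) / (1 - s))
    (κ : ℝ) (hκ : κ = (μ - 1) / (μ * Real.log μ)) :
    ∀ s ∈ Ioo q 1,
      Summable (fun i : ℕ => |μ ^ (-(i:ℤ)) * ((1 - f^[i] s) / (1 - s))|) ∧
      Summable (fun i : ℕ =>
        |μ ^ (-(i:ℤ)) * h (f^[i] s) * ((1 - f^[i] s) / (1 - s)) * Real.log (h (f^[i] s))|) ∧
      Summable (fun i : ℕ =>
        |μ ^ (-(i:ℤ)) * (μ - h (f^[i] s)) * ((1 - f^[i] s) / (1 - s)) * Real.log (1 - f^[i] s)|) ∧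
      γ s + κ * Real.log (1 - s) =
        (μ - 1) / μ * ∑' i : ℕ, μ ^ (-(i:ℤ)) * ((1 - f^[i] s) / (1 - s))
        - κ / μ * ∑' i : ℕ,
            μ ^ (-(i:ℤ)) * h (f^[i] s) * ((1 - f^[i] s) / (1 - s)) * Real.log (h (f^[i] s))
        + κ / μ * ∑' i : ℕ,
            μ ^ (-(i:ℤ)) * (μ - h (f^[i] s)) * ((1 - f^[i] s) / (1 - s)) * Real.log (1 - f^[i] s) := by
  have hμ0 : (0:ℝ) < μ := lt_trans one_pos hμ
  have hpsum : Summable p := by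
    by_contra h'
    rw [tsum_eq_zero_of_not_summable h'] at hp1
    norm_num at hp1
  have hkpsum : Summable (fun k : ℕ => (k:ℝ) * p k) := by
    by_contra h'
    rw [tsum_eq_zero_of_not_summable h'] at hμdef
    linarith
  have hsum_pow : ∀ x : ℝ, 0 ≤ x → x ≤ 1 → Summable (fun k : ℕ => p k * x ^ k) := by
    intro x hx0 hx1
    refine Summable.of_nonneg_of_le (fun k => mul_nonneg (hp0 k) (pow_nonneg hx0 k))
      (fun k => ?_) hpsum
    calc p k * x ^ k ≤ p k * 1 :=
          mul_le_mul_of_nonneg_left (pow_le_one₀ hx0 hx1) (hp0 k)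
      _ = p k := mul_one _
  have hf_mono : ∀ x y : ℝ, 0 ≤ x → x ≤ y → y ≤ 1 → f x ≤ f y := by
    intro x y hx hxy hy1
    rw [hf, hf]
    exact Summable.tsum_le_tsum
      (fun k => mul_le_mul_of_nonneg_left (pow_le_pow_left₀ hx hxy k) (hp0 k))
      (hsum_pow x hx (hxy.trans hy1)) (hsum_pow y (hx.trans hxy) hy1)
  have hf1 : f 1 = 1 := by rw [hf]; simpa using hp1
  have hf_nonneg : ∀ x : ℝ, 0 ≤ x → 0 ≤ f x := by
    intro x hx
    rw [hf]
    exact tsum_nonneg fun k => mul_nonneg (hp0 k) (pow_nonneg hx k)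
  have hf_le_one : ∀ x : ℝ, 0 ≤ x → x ≤ 1 → f x ≤ 1 := fun x hx hx1 =>
    (hf_mono x 1 hx hx1 le_rfl).trans_eq hf1
  -- convexity: f x ≤ x on [q,1]
  have hfs_le : ∀ x : ℝ, q ≤ x → x ≤ 1 → f x ≤ x := by
    intro x hqx hx1
    have h1q : 0 < 1 - q := by linarith [hq.2]
    set lam : ℝ := (x - q) / (1 - q) with hlam
    have hl0 : 0 ≤ lam := div_nonneg (by linarith) h1q.le
    have hl1 : lam ≤ 1 := (div_le_one h1q).2 (by linarith)
    have hxe : (1 - lam) * q + lam * 1 = x := by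
      field_simp [hlam]
      have h' : lam * (1 - q) = x - q := by rw [hlam]; exact div_mul_cancel₀ _ h1q.ne'
      linarith
    have hxe' : (1 - lam) * q + lam = x := by rw [← hxe]; ring
    have key : ∀ k : ℕ, x ^ k ≤ (1 - lam) * q ^ k + lam := by
      intro k
      have := (convexOn_pow (𝕜 := ℝ) k).2 (mem_Ici.2 hq.1) (mem_Ici.2 zero_le_one)
        (by linarith : (0:ℝ) ≤ 1 - lam) hl0 (by ring)
      simpa [smul_eq_mul, hxe', one_pow] using this
    have hterm : ∀ k : ℕ, p k * x ^ k ≤ (1 - lam) * (p k * q ^ k) + lam * p k := by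
      intro k
      have := mul_le_mul_of_nonneg_left (key k) (hp0 k)
      nlinarith [hp0 k]
    have hsummand : Summable (fun k : ℕ => (1 - lam) * (p k * q ^ k) + lam * p k) :=
      ((hsum_pow q hq.1 hq.2.le).mul_left _).add (hpsum.mul_left _)
    calc f x = ∑' k : ℕ, p k * x ^ k := hf x
      _ ≤ ∑' k : ℕ, ((1 - lam) * (p k * q ^ k) + lam * p k) :=
          Summable.tsum_le_tsum hterm (hsum_pow x (hq.1.trans hqx) hx1) hsummand
      _ = (1 - lam) * (∑' k : ℕ, p k * q ^ k) + lam * (∑' k : ℕ, p k) := by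
          rw [Summable.tsum_add ((hsum_pow q hq.1 hq.2.le).mul_left _) (hpsum.mul_left _),
            tsum_mul_left, tsum_mul_left]
      _ = (1 - lam) * q + lam * 1 := by rw [← hf q, hqfix, hp1]
      _ = x := hxe
  -- 1 - f x ≤ μ (1 - x)
  have hone_sub_f_le : ∀ x : ℝ, 0 ≤ x → x ≤ 1 → 1 - f x ≤ μ * (1 - x) := by
    intro x hx0 hx1
    have hb : ∀ k : ℕ, p k * (1 - x ^ k) ≤ (1 - x) * ((k:ℝ) * p k) := by
      intro k
      have hber : 1 + (k:ℝ) * (x - 1) ≤ (1 + (x - 1)) ^ k :=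
        one_add_mul_le_pow (by linarith) k
      have hx' : 1 - x ^ k ≤ (k:ℝ) * (1 - x) := by
        have : (1:ℝ) + (x - 1) = x := by ring
        rw [this] at hber
        nlinarith
      nlinarith [hp0 k, mul_le_mul_of_nonneg_left hx' (hp0 k)]
    have hsub1 : Summable (fun k : ℕ => p k * (1 - x ^ k)) := by
      refine (hpsum.sub (hsum_pow x hx0 hx1)).congr fun k => ?_
      ring
    have hsub : ∑' k : ℕ, p k * (1 - x ^ k) = 1 - f x := by
      have he : ∀ k : ℕ, p k * (1 - x ^ k) = p k - p k * x ^ k := fun k => by ring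
      rw [tsum_congr he, Summable.tsum_sub hpsum (hsum_pow x hx0 hx1), hp1, hf]
    calc 1 - f x = ∑' k : ℕ, p k * (1 - x ^ k) := hsub.symm
      _ ≤ ∑' k : ℕ, (1 - x) * ((k:ℝ) * p k) :=
          Summable.tsum_le_tsum hb hsub1 (hkpsum.mul_left _)
      _ = (1 - x) * μ := by rw [tsum_mul_left, ← hμdef]
      _ = μ * (1 - x) := mul_comm _ _
  intro s hs
  have hs0 : 0 ≤ s := hq.1.trans hs.1.le
  have hs1 : s < 1 := hs.2
  have h1s : 0 < 1 - s := by linarith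
  have hiter : ∀ i : ℕ, q ≤ f^[i] s ∧ f^[i] s ≤ s := by
    intro i
    induction i with
    | zero => exact ⟨hs.1.le, le_rfl⟩
    | succ n ih =>
      rw [Function.iterate_succ_apply']
      obtain ⟨h1, h2⟩ := ih
      refine ⟨?_, ?_⟩
      · calc q = f q := hqfix.symm
          _ ≤ f (f^[n] s) := hf_mono q _ hq.1 h1 (h2.trans hs1.le)
      · exact (hf_mono _ s (hq.1.trans h1) h2 hs1.le).trans (hfs_le s hs.1.le hs1.le)
  have ht0 : ∀ i, 0 ≤ f^[i] s := fun i => hq.1.trans (hiter i).1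
  have htlt : ∀ i, f^[i] s < 1 := fun i => lt_of_le_of_lt (hiter i).2 hs1
  have h1t : ∀ i, 1 - s ≤ 1 - f^[i] s := fun i => by linarith [(hiter i).2]
  have h1t1 : ∀ i, 1 - f^[i] s ≤ 1 := fun i => by linarith [ht0 i]
  have h1tpos : ∀ i, 0 < 1 - f^[i] s := fun i => lt_of_lt_of_le h1s (h1t i)
  have hnext : ∀ i : ℕ, f^[i+1] s = f (f^[i] s) := fun i =>
    Function.iterate_succ_apply' f i s
  have hhr : ∀ i : ℕ, h (f^[i] s) * (1 - f^[i] s) = 1 - f^[i+1] s := by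
    intro i
    rw [hh, hnext]
    exact div_mul_cancel₀ _ (h1tpos i).ne'
  have hhub : ∀ i, h (f^[i] s) ≤ μ := by
    intro i
    rw [hh, div_le_iff₀ (h1tpos i)]
    have := hone_sub_f_le (f^[i] s) (ht0 i) (htlt i).le
    linarith
  have hhlb : ∀ i, 1 - s ≤ h (f^[i] s) := by
    intro i
    rw [hh, le_div_iff₀ (h1tpos i)]
    have h2 := h1t (i+1)
    rw [hnext] at h2
    nlinarith [h1t1 i]
  have hhpos : ∀ i, 0 < h (f^[i] s) := fun i => lt_of_lt_of_le h1s (hhlb i)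
  have hlogμ : 0 ≤ Real.log μ := Real.log_nonneg hμ.le
  have hlogs : Real.log (1 - s) ≤ 0 := Real.log_nonpos h1s.le (by linarith)
  have hlogh : ∀ i, |Real.log (h (f^[i] s))| ≤ Real.log μ - Real.log (1 - s) := by
    intro i
    rw [abs_le]
    constructor
    · have := Real.log_le_log h1s (hhlb i)
      linarith
    · have := Real.log_le_log (hhpos i) (hhub i)
      linarith
  have hlogL : ∀ i, |Real.log (1 - f^[i] s)| ≤ -Real.log (1 - s) := by
    intro i
    rw [abs_le]
    constructor
    · have := Real.log_le_log h1s (h1t i)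
      linarith
    · have := Real.log_nonpos (h1tpos i).le (h1t1 i)
      linarith
  have hz : ∀ i : ℕ, μ ^ (-(i:ℤ)) = μ⁻¹ ^ i := fun i => by
    rw [zpow_neg, zpow_natCast, inv_pow]
  have hw0 : (0:ℝ) ≤ μ⁻¹ := inv_nonneg.2 hμ0.le
  have hw1 : μ⁻¹ < 1 := inv_lt_one_of_one_lt₀ hμ
  have geo : Summable (fun i : ℕ => μ⁻¹ ^ i) := summable_geometric_of_lt_one hw0 hw1
  have hrub : ∀ i, (1 - f^[i] s) / (1 - s) ≤ (1 - s)⁻¹ := by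
    intro i
    rw [div_le_iff₀ h1s, inv_mul_cancel₀ h1s.ne']
    exact h1t1 i
  have hrpos : ∀ i, 0 < (1 - f^[i] s) / (1 - s) := fun i => div_pos (h1tpos i) h1s
  -- summability of the three series
  have S1ab : Summable (fun i : ℕ => |μ ^ (-(i:ℤ)) * ((1 - f^[i] s) / (1 - s))|) := by
    refine Summable.of_nonneg_of_le (fun i => abs_nonneg _) (fun i => ?_)
      (geo.mul_right ((1 - s)⁻¹))
    rw [abs_mul, hz, abs_pow, abs_of_nonneg hw0, abs_of_pos (hrpos i)]
    exact mul_le_mul_of_nonneg_left (hrub i) (pow_nonneg hw0 i)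
  have S2ab : Summable (fun i : ℕ =>
      |μ ^ (-(i:ℤ)) * h (f^[i] s) * ((1 - f^[i] s) / (1 - s)) * Real.log (h (f^[i] s))|) := by
    refine Summable.of_nonneg_of_le (fun i => abs_nonneg _) (fun i => ?_)
      (((geo.mul_right μ).mul_right ((1 - s)⁻¹)).mul_right
        (Real.log μ - Real.log (1 - s)))
    rw [abs_mul, abs_mul, abs_mul, hz, abs_pow, abs_of_nonneg hw0]
    gcongr
    · rw [abs_of_pos (hhpos i)]; exact hhub i
    · rw [abs_of_pos (hrpos i)]; exact hrub i
    · exact hlogh i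
  have S3ab : Summable (fun i : ℕ =>
      |μ ^ (-(i:ℤ)) * (μ - h (f^[i] s)) * ((1 - f^[i] s) / (1 - s)) *
        Real.log (1 - f^[i] s)|) := by
    refine Summable.of_nonneg_of_le (fun i => abs_nonneg _) (fun i => ?_)
      (((geo.mul_right μ).mul_right ((1 - s)⁻¹)).mul_right (-Real.log (1 - s)))
    rw [abs_mul, abs_mul, abs_mul, hz, abs_pow, abs_of_nonneg hw0]
    gcongr
    · rw [abs_of_nonneg (by linarith [hhub i] : (0:ℝ) ≤ μ - h (f^[i] s))]
      linarith [hhpos i]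
    · rw [abs_of_pos (hrpos i)]; exact hrub i
    · exact hlogL i
  have S2sum : Summable (fun i : ℕ =>
      μ ^ (-(i:ℤ)) * h (f^[i] s) * ((1 - f^[i] s) / (1 - s)) * Real.log (h (f^[i] s))) :=
    summable_abs_iff.mp S2ab
  have S3sum : Summable (fun i : ℕ =>
      μ ^ (-(i:ℤ)) * (μ - h (f^[i] s)) * ((1 - f^[i] s) / (1 - s)) *
        Real.log (1 - f^[i] s)) := summable_abs_iff.mp S3ab
  refine ⟨S1ab, S2ab, S3ab, ?_⟩
  -- first sum: γ s
  have hFsum : Summable (fun i : ℕ => f^[i] s / μ ^ i) := by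
    refine Summable.of_nonneg_of_le
      (fun i => div_nonneg (ht0 i) (pow_nonneg hμ0.le i)) (fun i => ?_) geo
    rw [inv_pow, ← one_div, div_le_div_iff₀ (pow_pos hμ0 i) (pow_pos hμ0 i)]
    have := (hiter i).2
    nlinarith [pow_pos hμ0 i]
  have hgeo_val : ∑' i : ℕ, (μ⁻¹) ^ i = μ / (μ - 1) := by
    rw [tsum_geometric_of_lt_one hw0 hw1]
    have h1 : 1 - μ⁻¹ = (μ - 1) / μ := by field_simp
    rw [h1, inv_div]
  have hγ1 : γ s = (μ - 1) / μ * ∑' i : ℕ, μ ^ (-(i:ℤ)) * ((1 - f^[i] s) / (1 - s)) := by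
    have e1 : ∑' i : ℕ, ((μ⁻¹) ^ i - f^[i] s / μ ^ i)
        = μ / (μ - 1) - ∑' i : ℕ, f^[i] s / μ ^ i := by
      rw [Summable.tsum_sub geo hFsum, hgeo_val]
    have e2 : (1 : ℝ) - (μ - 1) / μ * (∑' i : ℕ, f^[i] s / μ ^ i)
        = (μ - 1) / μ * (μ / (μ - 1) - ∑' i : ℕ, f^[i] s / μ ^ i) := by
      field_simp [sub_ne_zero_of_ne hμ.ne']
    rw [hγ, hg, e2, ← e1, mul_div_assoc]
    congr 1
    rw [← tsum_div_const]
    congr 1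
    funext i
    rw [hz i, inv_pow]
    have hp : (μ:ℝ) ^ i ≠ 0 := (pow_pos hμ0 i).ne'
    field_simp
  -- telescoping for the last two sums
  set a : ℕ → ℝ := fun i =>
    μ * μ⁻¹ ^ i * ((1 - f^[i] s) / (1 - s)) * Real.log (1 - f^[i] s) with ha
  have hA : ∀ i : ℕ,
      μ ^ (-(i:ℤ)) * (μ - h (f^[i] s)) * ((1 - f^[i] s) / (1 - s)) * Real.log (1 - f^[i] s)
        - μ ^ (-(i:ℤ)) * h (f^[i] s) * ((1 - f^[i] s) / (1 - s)) * Real.log (h (f^[i] s))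
      = a i - a (i + 1) := by
    intro i
    have hlogdiv : Real.log (h (f^[i] s))
        = Real.log (1 - f^[i+1] s) - Real.log (1 - f^[i] s) := by
      rw [hh, hnext, Real.log_div (by have := h1tpos (i+1); rw [hnext] at this; linarith)
        (h1tpos i).ne']
    have hr' : h (f^[i] s) * ((1 - f^[i] s) / (1 - s)) = (1 - f^[i+1] s) / (1 - s) := by
      rw [mul_div_assoc', hhr]
    have hμw : μ * μ⁻¹ ^ (i + 1) = μ⁻¹ ^ i := by
      rw [pow_succ]
      field_simp
    rw [hz i, ha, hlogdiv]
    simp only []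
    rw [hnext] at hr' ⊢
    linear_combination (-(μ⁻¹ ^ i * Real.log (1 - f (f^[i] s)))) * hr'
      + ((1 - f (f^[i] s)) / (1 - s) * Real.log (1 - f (f^[i] s))) * hμw
  have hlim : Filter.Tendsto a Filter.atTop (nhds 0) := by
    rw [tendsto_zero_iff_abs_tendsto_zero]
    have hb : ∀ n : ℕ, |a n| ≤ μ * (1 - s)⁻¹ * (-Real.log (1 - s)) * μ⁻¹ ^ n := by
      intro n
      rw [ha]
      simp only []
      rw [abs_mul, abs_mul, abs_mul, abs_pow, abs_of_nonneg hw0, abs_of_pos hμ0]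
      calc μ * μ⁻¹ ^ n * |(1 - f^[n] s) / (1 - s)| * |Real.log (1 - f^[n] s)|
          ≤ μ * μ⁻¹ ^ n * (1 - s)⁻¹ * (-Real.log (1 - s)) := by
            gcongr
            · rw [abs_of_pos (hrpos n)]; exact hrub n
            · exact hlogL n
        _ = μ * (1 - s)⁻¹ * (-Real.log (1 - s)) * μ⁻¹ ^ n := by ring
    have h0 : Filter.Tendsto
        (fun n : ℕ => μ * (1 - s)⁻¹ * (-Real.log (1 - s)) * μ⁻¹ ^ n)
        Filter.atTop (nhds 0) := by
      have := tendsto_pow_atTop_nhds_zero_of_lt_one hw0 hw1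
      simpa using this.const_mul (μ * (1 - s)⁻¹ * (-Real.log (1 - s)))
    exact squeeze_zero (fun n => abs_nonneg _) hb h0
  have hd : Summable (fun i : ℕ =>
      μ ^ (-(i:ℤ)) * (μ - h (f^[i] s)) * ((1 - f^[i] s) / (1 - s)) * Real.log (1 - f^[i] s)
      - μ ^ (-(i:ℤ)) * h (f^[i] s) * ((1 - f^[i] s) / (1 - s)) * Real.log (h (f^[i] s))) :=
    S3sum.sub S2sum
  have hpartial : ∀ n : ℕ, ∑ i ∈ Finset.range n,
      (μ ^ (-(i:ℤ)) * (μ - h (f^[i] s)) * ((1 - f^[i] s) / (1 - s)) * Real.log (1 - f^[i] s)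
      - μ ^ (-(i:ℤ)) * h (f^[i] s) * ((1 - f^[i] s) / (1 - s)) * Real.log (h (f^[i] s)))
      = a 0 - a n := by
    intro n
    rw [Finset.sum_congr rfl (fun i _ => hA i)]
    exact Finset.sum_range_sub' a n
  have hhs2 : HasSum (fun i : ℕ =>
      μ ^ (-(i:ℤ)) * (μ - h (f^[i] s)) * ((1 - f^[i] s) / (1 - s)) * Real.log (1 - f^[i] s)
      - μ ^ (-(i:ℤ)) * h (f^[i] s) * ((1 - f^[i] s) / (1 - s)) * Real.log (h (f^[i] s))) (a 0) := by
    rw [hd.hasSum_iff_tendsto_nat]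
    have := (tendsto_const_nhds (x := a 0) (f := Filter.atTop (α := ℕ))).sub hlim
    simp only [sub_zero] at this
    apply this.congr
    intro n
    exact (hpartial n).symm
  have ha0 : a 0 = μ * Real.log (1 - s) := by
    rw [ha]
    simp only [Function.iterate_zero_apply, pow_zero]
    rw [div_self h1s.ne']
    ring
  have hS : (∑' i : ℕ, μ ^ (-(i:ℤ)) * (μ - h (f^[i] s)) * ((1 - f^[i] s) / (1 - s)) *
        Real.log (1 - f^[i] s))
      - ∑' i : ℕ, μ ^ (-(i:ℤ)) * h (f^[i] s) * ((1 - f^[i] s) / (1 - s)) *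
        Real.log (h (f^[i] s)) = μ * Real.log (1 - s) := by
    rw [← Summable.tsum_sub S3sum S2sum, hhs2.tsum_eq, ha0]
  have hfin : κ / μ * (μ * Real.log (1 - s)) = κ * Real.log (1 - s) := by
    field_simp
  rw [hγ1]
  rw [← hS] at hfin
  linarith [hfin]
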